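/- Under the stated assumptions, for every 0 ≤ m < n the restriction of the martingale preserving measure \tilde P_m to the σ-algebra F_m coincides with the restriction of P to F_m; consequently, the law under \tilde P_m of any F-adapted process (X_l)_{0 ≤ l ≤ m} equals its law under P. -/

import Mathlib

open MeasureTheory Filter Set ENNReal

/-- The conditional density `η_m^y = P[Y = y | ℱ m] / P[Y = y]` of the signal `Y`
with respect to the filtration `ℱ`. -/
noncomputable def condDensity {Ω E : Type*} {mΩ : MeasurableSpace Ω}
    (P : Measure Ω) (ℱ : ℕ → MeasurableSpace Ω) (Y : Ω → E) (m : ℕ) (y : E) : Ω → ℝ :=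
  fun ω =>
    (P[Set.indicator {ω' | Y ω' = y} (fun _ => (1 : ℝ)) | ℱ m]) ω / (P {ω' | Y ω' = y}).toReal

/-- The `[0,m]`-martingale preserving measure `d\tilde P_m = (1/η_m^{Y}) dP`. -/
noncomputable def mpMeasure {Ω E : Type*} {mΩ : MeasurableSpace Ω}
    (P : Measure Ω) (ℱ : ℕ → MeasurableSpace Ω) (Y : Ω → E) (m : ℕ) : Measure Ω :=
  P.withDensity fun ω => ENNReal.ofReal (condDensity P ℱ Y m (Y ω) ω)⁻¹


lemma pullout {Ω : Type*} {m' : MeasurableSpace Ω} {mΩ : MeasurableSpace Ω} (P : Measure Ω)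
    [IsFiniteMeasure P] (hm' : m' ≤ mΩ)
    {B : Set Ω} (hB : MeasurableSet[mΩ] B) {A : Set Ω} (hA : MeasurableSet[m'] A)
    {g : Ω → ℝ≥0∞} (hg : Measurable[m'] g) :
    ∫⁻ ω in A ∩ B, g ω ∂P
      = ∫⁻ ω in A, g ω * ENNReal.ofReal ((P[B.indicator (fun _ => (1:ℝ)) | m']) ω) ∂P := by
  have hce : Integrable (P[B.indicator (fun _ => (1:ℝ)) | m']) P := integrable_condExp
  have hce_nn : 0 ≤ᵐ[P] (P[B.indicator (fun _ => (1:ℝ)) | m']) :=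
    condExp_nonneg (Filter.Eventually.of_forall fun ω => Set.indicator_nonneg (fun _ _ => zero_le_one) ω)
  have hce_meas : Measurable[m'] (P[B.indicator (fun _ => (1:ℝ)) | m']) :=
    stronglyMeasurable_condExp.measurable
  refine @Measurable.ennreal_induction Ω m'
    (fun g => ∫⁻ ω in A ∩ B, g ω ∂P
      = ∫⁻ ω in A, g ω * ENNReal.ofReal ((P[B.indicator (fun _ => (1:ℝ)) | m']) ω) ∂P)
    ?_ ?_ ?_ g hg
  · intro c C hC
    have hCm : MeasurableSet[mΩ] C := hm' C hC
    have hAC : MeasurableSet[mΩ] (A ∩ C) := MeasurableSet.inter (hm' A hA) hCm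
    rw [lintegral_indicator hCm, Measure.restrict_restrict hCm]
    have : (fun ω => C.indicator (fun _ => c) ω * ENNReal.ofReal ((P[B.indicator (fun _ => (1:ℝ)) | m']) ω))
        = C.indicator (fun ω => c * ENNReal.ofReal ((P[B.indicator (fun _ => (1:ℝ)) | m']) ω)) := by
      funext ω
      by_cases h : ω ∈ C <;> simp [h]
    rw [this, lintegral_indicator hCm, Measure.restrict_restrict hCm,
      lintegral_const_mul _ ((hce_meas.mono hm' le_rfl).ennreal_ofReal),
      setLIntegral_const]
    have h1 : ∫⁻ ω in C ∩ A, ENNReal.ofReal ((P[B.indicator (fun _ => (1:ℝ)) | m']) ω) ∂P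
        = ENNReal.ofReal (∫ ω in C ∩ A, (P[B.indicator (fun _ => (1:ℝ)) | m']) ω ∂P) := by
      rw [ofReal_integral_eq_lintegral_ofReal (hce.restrict) (ae_restrict_of_ae hce_nn)]
    have h2 : ∫ ω in C ∩ A, (P[B.indicator (fun _ => (1:ℝ)) | m']) ω ∂P
        = ∫ ω in C ∩ A, B.indicator (fun _ => (1:ℝ)) ω ∂P :=
      setIntegral_condExp hm' (Integrable.indicator (integrable_const 1) hB) (hC.inter hA)
    have h3 : ∫ ω in C ∩ A, B.indicator (fun _ => (1:ℝ)) ω ∂P = (P (C ∩ A ∩ B)).toReal := by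
      rw [setIntegral_indicator hB, setIntegral_const, smul_eq_mul, mul_one, measureReal_def]
    rw [h1, h2, h3, ENNReal.ofReal_toReal (measure_ne_top _ _)]
    congr 1
    rw [Set.inter_comm C (A ∩ B), Set.inter_assoc, Set.inter_comm B C, ← Set.inter_assoc,
      Set.inter_comm A C]
  · intro f g _ hf hg ihf ihg
    have hf' : Measurable[mΩ] f := hf.mono hm' le_rfl
    have hg' : Measurable[mΩ] g := hg.mono hm' le_rfl
    simp only [Pi.add_apply, add_mul]
    rw [lintegral_add_left hf', lintegral_add_left
      (f := fun ω => f ω * ENNReal.ofReal ((P[B.indicator (fun _ => (1:ℝ)) | m']) ω))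
      (hf'.mul ((hce_meas.mono hm' le_rfl).ennreal_ofReal)), ihf, ihg]
  · intro f hf hmono ih
    have hf' : ∀ n, Measurable[mΩ] (f n) := fun n => (hf n).mono hm' le_rfl
    rw [lintegral_iSup hf' hmono]
    have : ∀ n, ∫⁻ ω in A ∩ B, f n ω ∂P
        = ∫⁻ ω in A, f n ω * ENNReal.ofReal ((P[B.indicator (fun _ => (1:ℝ)) | m']) ω) ∂P :=
      ih
    simp_rw [ENNReal.iSup_mul]
    rw [lintegral_iSup (f := fun n ω => f n ω * ENNReal.ofReal ((P[B.indicator (fun _ => (1:ℝ)) | m']) ω))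
      (fun n => (hf' n).mul
      ((hce_meas.mono hm' le_rfl).ennreal_ofReal))
      (fun i j hij ω => mul_le_mul_left (hmono hij ω) _)]
    exact iSup_congr this

/-- The restriction of the martingale preserving measure `\tilde P_m` to `ℱ m` coincides with
that of `P`; consequently the law under `\tilde P_m` of any `ℱ`-adapted process
`(X_l)_{0 ≤ l ≤ m}` equals its law under `P`. -/
theorem stmt3 {Ω E : Type*} {mΩ : MeasurableSpace Ω} [Countable E]
    (P : Measure Ω) [IsProbabilityMeasure P] (n : ℕ)
    (ℱ : ℕ → MeasurableSpace Ω) (hmono : Monotone ℱ) (hle : ∀ m, ℱ m ≤ mΩ)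
    (Y : Ω → E) (hY : @Measurable Ω E (ℱ n) ⊤ Y)
    (hYpos : ∀ y ∈ Set.range Y, 0 < P {ω | Y ω = y})
    (hη : ∀ m, m < n → ∀ y ∈ Set.range Y, ∀ᵐ ω ∂P, 0 < condDensity P ℱ Y m y ω) :
    ∀ m, m < n →
      (mpMeasure P ℱ Y m).trim (hle m) = P.trim (hle m) ∧
      ∀ X : ℕ → Ω → ℝ, (∀ l, l ≤ m → Measurable[ℱ l] (X l)) →
        Measure.map (fun ω (l : Fin (m + 1)) => X l ω) (mpMeasure P ℱ Y m) =
          Measure.map (fun ω (l : Fin (m + 1)) => X l ω) P := by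
  intro m hm
  -- measurability of the level sets of `Y`
  have hYy : ∀ y : E, MeasurableSet {ω | Y ω = y} := by
    intro y
    have : MeasurableSet[ℱ n] (Y ⁻¹' {y}) := hY (by trivial)
    exact hle n _ this
  -- measurability of the conditional densities
  have hcd : ∀ y : E, Measurable[ℱ m] (condDensity P ℱ Y m y) := by
    intro y
    exact (stronglyMeasurable_condExp.measurable).div_const _
  have hcdM : ∀ y : E, Measurable (condDensity P ℱ Y m y) :=
    fun y => (hcd y).mono (hle m) le_rfl
  -- key: the measures agree on `ℱ m`
  have key : ∀ s : Set Ω, MeasurableSet[ℱ m] s → mpMeasure P ℱ Y m s = P s := by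
    intro s hs
    have hsM : MeasurableSet s := hle m s hs
    rw [mpMeasure, withDensity_apply _ hsM]
    set F : E → Ω → ℝ≥0∞ := fun y ω => ENNReal.ofReal (condDensity P ℱ Y m y ω)⁻¹ with hF
    have hdecomp : ∀ ω, ENNReal.ofReal (condDensity P ℱ Y m (Y ω) ω)⁻¹
        = ∑' y : E, Set.indicator {ω' | Y ω' = y} (F y) ω := by
      intro ω
      rw [tsum_eq_single (Y ω) (fun y hy => Set.indicator_of_notMem
        (by simp only [Set.mem_setOf_eq]; exact fun h => hy (h ▸ rfl)) _)]
      rw [Set.indicator_of_mem (by simp : ω ∈ {ω' | Y ω' = Y ω})]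
    have hFmeas : ∀ y : E, Measurable (fun ω => Set.indicator {ω' | Y ω' = y} (F y) ω) := by
      intro y
      exact ((hcdM y).inv.ennreal_ofReal).indicator (hYy y)
    calc ∫⁻ ω in s, ENNReal.ofReal (condDensity P ℱ Y m (Y ω) ω)⁻¹ ∂P
        = ∫⁻ ω in s, ∑' y : E, Set.indicator {ω' | Y ω' = y} (F y) ω ∂P := by
          exact lintegral_congr fun ω => hdecomp ω
      _ = ∑' y : E, ∫⁻ ω in s, Set.indicator {ω' | Y ω' = y} (F y) ω ∂P :=
          lintegral_tsum fun y => (hFmeas y).aemeasurable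
      _ = ∑' y : E, P {ω' | Y ω' = y} * P s := by
          refine tsum_congr fun y => ?_
          rw [lintegral_indicator (hYy y), Measure.restrict_restrict (hYy y),
            Set.inter_comm]
          by_cases hy : y ∈ Set.range Y
          · -- positive probability case
            have hpos : 0 < (P {ω' | Y ω' = y}).toReal :=
              ENNReal.toReal_pos (hYpos y hy).ne' (measure_ne_top _ _)
            have hpull := pullout P (hle m) (hYy y) hs
              ((hcd y).inv.ennreal_ofReal)
            rw [show ∫⁻ a in s ∩ {ω | Y ω = y}, F y a ∂P = ∫⁻ ω in s, F y ω * ENNReal.ofReal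
                ((P[Set.indicator {ω' | Y ω' = y} (fun _ => (1:ℝ)) | ℱ m]) ω) ∂P from hpull]
            have hae : ∀ᵐ ω ∂P, F y ω * ENNReal.ofReal
                ((P[Set.indicator {ω' | Y ω' = y} (fun _ => (1:ℝ)) | ℱ m]) ω)
                = ENNReal.ofReal ((P {ω' | Y ω' = y}).toReal) := by
              filter_upwards [hη m hm y hy] with ω hω
              set c := (P[Set.indicator {ω' | Y ω' = y} (fun _ => (1:ℝ)) | ℱ m]) ω with hc
              set p := (P {ω' | Y ω' = y}).toReal with hp
              have hcd_eq : condDensity P ℱ Y m y ω = c / p := rfl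
              have hcpos : 0 < c := by
                have := hω
                rw [hcd_eq] at this
                by_contra h
                push_neg at h
                exact absurd this (not_lt.mpr (div_nonpos_of_nonpos_of_nonneg h hpos.le))
              have h1 : (condDensity P ℱ Y m y ω)⁻¹ = p / c := by
                rw [hcd_eq, inv_div]
              rw [hF]
              simp only
              rw [h1, ← ENNReal.ofReal_mul (div_nonneg hpos.le hcpos.le),
                div_mul_cancel₀ _ hcpos.ne']
            rw [lintegral_congr_ae (ae_restrict_of_ae hae), setLIntegral_const,
              ENNReal.ofReal_toReal (measure_ne_top _ _)]
          · -- empty level set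
            have hempty : {ω' | Y ω' = y} = (∅ : Set Ω) := by
              ext ω; simp only [Set.mem_setOf_eq, Set.mem_empty_iff_false, iff_false]
              exact fun h => hy ⟨ω, h⟩
            rw [hempty]
            simp
      _ = (∑' y : E, P {ω' | Y ω' = y}) * P s := ENNReal.tsum_mul_right
      _ = P s := by
          have hU : (⋃ y : E, {ω' | Y ω' = y}) = Set.univ := by
            ext ω; simp only [Set.mem_iUnion, Set.mem_setOf_eq, Set.mem_univ, iff_true]
            exact ⟨Y ω, rfl⟩
          have hdisj : Pairwise (Function.onFun Disjoint fun y : E => {ω' | Y ω' = y}) := by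
            intro y z hyz
            rw [Function.onFun, Set.disjoint_left]
            intro ω h1 h2
            exact hyz ((h1 : Y ω = y) ▸ (h2 : Y ω = z) ▸ rfl)
          rw [← measure_iUnion hdisj (fun y => hYy y), hU, measure_univ, one_mul]
  constructor
  · refine @Measure.ext Ω (ℱ m) _ _ fun s hs => ?_
    rw [trim_measurableSet_eq (hle m) hs, trim_measurableSet_eq (hle m) hs]
    exact key s hs
  · intro X hX
    have hfm : Measurable[ℱ m] (fun ω (l : Fin (m + 1)) => X l ω) := by
      refine @measurable_pi_lambda Ω (Fin (m + 1)) (fun _ => ℝ) (ℱ m) _ _ fun l => ?_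
      exact ((hX l (Nat.lt_succ_iff.mp l.isLt)).mono
        (hmono (Nat.lt_succ_iff.mp l.isLt)) le_rfl)
    have hfM : Measurable (fun ω (l : Fin (m + 1)) => X l ω) :=
      hfm.mono (hle m) le_rfl
    ext s hs
    rw [Measure.map_apply hfM hs, Measure.map_apply hfM hs]
    exact key _ (hfm hs)
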